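/- Define c(m,n,k,i,j) = Σ_{l=0}^{k} (-1)^l · C(i+j-k, i-l) · C(m-l, k-l) · C(n-k+l, l). Then for parameters in the domain (with i+1 ≤ m, j+1 ≤ n, i+j+1 ≤ m+n-k), the reverse recurrence holds: (i+j-k+1)(m+n-i-j-k) · c(m,n,k,i,j) = (i+1)(m-i) · c(m,n,k,i+1,j) + (j+1)(n-j) · c(m,n,k,i,j+1). -/

import Mathlib

open Finset

/-- Integer binomial coefficient: `C(a,b) = 0` when `b < 0` or `b > a`. -/
def ch (a b : ℤ) : ℤ := if 0 ≤ b ∧ b ≤ a then ((a.toNat).choose b.toNat : ℤ) else 0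

/-- Clebsch-Gordan sum `c_{m,n,k}(i,j)`. -/
def cg (m n k i j : ℕ) : ℤ :=
  ∑ l ∈ Finset.range (k+1),
    (-1:ℤ)^l * ch ((i:ℤ)+(j:ℤ)-(k:ℤ)) ((i:ℤ)-(l:ℤ))
      * ch ((m:ℤ)-(l:ℤ)) ((k:ℤ)-(l:ℤ)) * ch ((n:ℤ)-(k:ℤ)+(l:ℤ)) (l:ℤ)

/-- Trinomial coefficient `(a+b+c)! / (a! b! c!)`. -/
def mult (a b c : ℕ) : ℕ := (a+b+c).factorial / (a.factorial * b.factorial * c.factorial)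

lemma ch_natCast (x y : ℕ) : ch (x:ℤ) (y:ℤ) = (x.choose y : ℤ) := by
  unfold ch
  split_ifs with h
  · simp
  · have hxy : x < y := by omega
    simp [Nat.choose_eq_zero_of_lt hxy]

lemma ch_neg (a b : ℤ) (hb : b < 0) : ch a b = 0 := by
  unfold ch
  rw [if_neg (by omega)]

lemma ch_gt (a b : ℤ) (h : a < b) : ch a b = 0 := by
  unfold ch
  rw [if_neg (by omega)]

/-- Absorption identity: `b * C(a,b) = a * C(a-1,b-1)` for all integers. -/
lemma chE2 (a b : ℤ) : b * ch a b = a * ch (a-1) (b-1) := by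
  by_cases h0 : 0 ≤ b ∧ b ≤ a
  · obtain ⟨hb, hba⟩ := h0
    have ha : 0 ≤ a := le_trans hb hba
    lift a to ℕ using ha
    lift b to ℕ using hb
    rcases Nat.eq_zero_or_pos b with rfl | hbpos
    · rw [ch_neg ((a:ℤ)-1) (((0:ℕ):ℤ)-1) (by omega)]
      push_cast
      ring
    · have ea : ((a:ℤ))-1 = ((a-1:ℕ):ℤ) := by omega
      have eb : ((b:ℤ))-1 = ((b-1:ℕ):ℤ) := by omega
      rw [ea, eb, ch_natCast, ch_natCast]
      have hN : a * (a-1).choose (b-1) = a.choose b * b := by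
        have := Nat.add_one_mul_choose_eq (a-1) (b-1)
        have e1 : a - 1 + 1 = a := by omega
        have e2 : b - 1 + 1 = b := by omega
        rwa [e1, e2] at this
      have hZ : (a:ℤ) * ((a-1).choose (b-1) : ℤ) = (a.choose b : ℤ) * (b:ℤ) := by
        exact_mod_cast congrArg (Nat.cast : ℕ → ℤ) hN
      linarith [hZ]
  · rw [ch, if_neg h0]
    rcases lt_or_ge b 0 with h | h
    · rw [ch_neg (a-1) (b-1) (by omega)]
      ring
    · have hab : a < b := by omega
      rw [ch_gt (a-1) (b-1) (by omega)]
      ring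

/-- Complementary absorption: `(a-b) * C(a,b) = a * C(a-1,b)` for all integers. -/
lemma chE1 (a b : ℤ) : (a - b) * ch a b = a * ch (a-1) b := by
  by_cases h0 : 0 ≤ b ∧ b ≤ a
  · obtain ⟨hb, hba⟩ := h0
    have ha : 0 ≤ a := le_trans hb hba
    lift a to ℕ using ha
    lift b to ℕ using hb
    rcases eq_or_lt_of_le hba with heq | hlt
    · have heq' : (a:ℤ) = (b:ℤ) := by omega
      rw [ch_gt ((a:ℤ)-1) (b:ℤ) (by omega)]
      rw [heq']
      ring
    · have ea : ((a:ℤ))-1 = ((a-1:ℕ):ℤ) := by omega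
      rw [ea, ch_natCast, ch_natCast]
      have hN : (a-1).choose b * a = a.choose b * (a - b) := by
        have := Nat.choose_mul_succ_eq (a-1) b
        have e1 : a - 1 + 1 = a := by omega
        rwa [e1] at this
      have hZ : ((a-1).choose b : ℤ) * (a:ℤ) = (a.choose b : ℤ) * ((a:ℤ) - (b:ℤ)) := by
        have hba' : b ≤ a := by omega
        have : ((a - b : ℕ) : ℤ) = (a:ℤ) - (b:ℤ) := by omega
        rw [← this]
        exact_mod_cast congrArg (Nat.cast : ℕ → ℤ) hN
      linarith [hZ]
  · rw [ch, if_neg h0]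
    rcases lt_or_ge b 0 with h | h
    · rw [ch_neg (a-1) b (by omega)]
      ring
    · have hab : a < b := by omega
      rw [ch_gt (a-1) b (by omega)]
      ring

/-- Telescoping certificate for the reverse recurrence. -/
def Gc (m n k i j l : ℕ) : ℤ :=
  (-1:ℤ)^l * (l:ℤ) * ((m:ℤ)+1-(l:ℤ)) * ch ((m:ℤ)-(l:ℤ)) ((k:ℤ)-(l:ℤ))
    * ch ((n:ℤ)-(k:ℤ)+(l:ℤ)) (l:ℤ) * ch ((i:ℤ)+(j:ℤ)-(k:ℤ)+1) ((i:ℤ)+1-(l:ℤ))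

theorem stmt_2 (m n k i j : ℕ) (hkm : k ≤ m) (hkn : k ≤ n) (him : i ≤ m) (hjn : j ≤ n)
    (hk : k ≤ i + j) (hub : i + j ≤ m + n - k)
    (hi : i + 1 ≤ m) (hj : j + 1 ≤ n) (hij : i + j + 1 ≤ m + n - k) :
    ((i:ℤ)+(j:ℤ)-(k:ℤ)+1) * ((m:ℤ)+(n:ℤ)-(i:ℤ)-(j:ℤ)-(k:ℤ)) * cg m n k i j
      = ((i:ℤ)+1) * ((m:ℤ)-(i:ℤ)) * cg m n k (i+1) j
        + ((j:ℤ)+1) * ((n:ℤ)-(j:ℤ)) * cg m n k i (j+1) := by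
  have hG0 : Gc m n k i j 0 = 0 := by
    unfold Gc
    push_cast
    ring
  have hGk : Gc m n k i j (k+1) = 0 := by
    unfold Gc
    rw [ch_neg ((m:ℤ)-((k+1:ℕ):ℤ)) ((k:ℤ)-((k+1:ℕ):ℤ)) (by push_cast; omega)]
    ring
  have hsum : ((i:ℤ)+(j:ℤ)-(k:ℤ)+1) * ((m:ℤ)+(n:ℤ)-(i:ℤ)-(j:ℤ)-(k:ℤ)) * cg m n k i j
      - ((i:ℤ)+1) * ((m:ℤ)-(i:ℤ)) * cg m n k (i+1) j
      - ((j:ℤ)+1) * ((n:ℤ)-(j:ℤ)) * cg m n k i (j+1)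
      = ∑ l ∈ Finset.range (k+1), (Gc m n k i j (l+1) - Gc m n k i j l) := by
    unfold cg
    rw [Finset.mul_sum, Finset.mul_sum, Finset.mul_sum, ← Finset.sum_sub_distrib,
      ← Finset.sum_sub_distrib]
    refine Finset.sum_congr rfl fun l hl => ?_
    have h2 := chE2 ((i:ℤ)+(j:ℤ)-(k:ℤ)+1) ((i:ℤ)+1-(l:ℤ))
    have h3 := chE1 ((i:ℤ)+(j:ℤ)-(k:ℤ)+1) ((i:ℤ)-(l:ℤ))
    have hP := chE2 ((m:ℤ)-(l:ℤ)) ((k:ℤ)-(l:ℤ))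
    have hQ := chE2 ((n:ℤ)-(k:ℤ)+(l:ℤ)+1) ((l:ℤ)+1)
    unfold Gc
    push_cast
    linear_combination (norm := ring_nf)
      (-1:ℤ)^l * ch ((m:ℤ)-(l:ℤ)) ((k:ℤ)-(l:ℤ)) * ch ((n:ℤ)-(k:ℤ)+(l:ℤ)) (l:ℤ)
          * ((l:ℤ)-(m:ℤ)+(i:ℤ)) * h2
        + (-1:ℤ)^l * ch ((m:ℤ)-(l:ℤ)) ((k:ℤ)-(l:ℤ)) * ch ((n:ℤ)-(k:ℤ)+(l:ℤ)) (l:ℤ)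
          * ((k:ℤ)+(j:ℤ)-(n:ℤ)-(l:ℤ)) * h3
        - (-1:ℤ)^l * ch ((i:ℤ)+(j:ℤ)-(k:ℤ)+1) ((i:ℤ)-(l:ℤ)) * ((l:ℤ)+1)
          * ch ((n:ℤ)-(k:ℤ)+(l:ℤ)+1) ((l:ℤ)+1) * hP
        + (-1:ℤ)^l * ch ((i:ℤ)+(j:ℤ)-(k:ℤ)+1) ((i:ℤ)-(l:ℤ)) * ((k:ℤ)-(l:ℤ))
          * ch ((m:ℤ)-(l:ℤ)) ((k:ℤ)-(l:ℤ)) * hQ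
  rw [Finset.sum_range_sub (fun l => Gc m n k i j l) (k+1), hGk, hG0, sub_zero] at hsum
  linarith [hsum]
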